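/- Let A and B be finite sets with probability measures P and P', and R ⊆ A × B. If P(U) ≤ P'(N_R(U)) + ε for all U ⊆ A where ε ≥ 0 is real, then there exist sequences of rational-valued probability measures P_i on A, P'_i on B, and rationals ε_i ↓ ε, with P_i → P, P'_i → P' pointwise, such that for each i, P_i(U) ≤ P'_i(N_R(U)) + ε_i for all U ⊆ A. -/

import Mathlib

open Finset
open scoped Classical

lemma fl_le (x : ℝ) (i : ℕ) : ((((⌊x * 2^i⌋ : ℤ) : ℚ) / 2^i : ℚ) : ℝ) ≤ x := by
  push_cast
  rw [div_le_iff₀ (by positivity : (0:ℝ) < 2^i)]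
  exact Int.floor_le _

lemma fl_ge (x : ℝ) (i : ℕ) : x - 1/2^i ≤ ((((⌊x * 2^i⌋ : ℤ) : ℚ) / 2^i : ℚ) : ℝ) := by
  have hpos : (0:ℝ) < 2^i := by positivity
  have h : x * 2^i - 1 < ((⌊x * 2^i⌋ : ℤ) : ℝ) := Int.sub_one_lt_floor _
  push_cast
  rw [le_div_iff₀ hpos]
  have he : (x - 1/2^i) * 2^i = x * 2^i - 1 := by field_simp
  linarith [he ▸ h]

lemma fl_nonneg (x : ℝ) (i : ℕ) (hx : 0 ≤ x) : (0:ℚ) ≤ ((⌊x * 2^i⌋ : ℤ) : ℚ) / 2^i := by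
  have : (0:ℤ) ≤ ⌊x * 2^i⌋ := Int.floor_nonneg.mpr (by positivity)
  positivity

lemma ce_ge (x : ℝ) (i : ℕ) : x ≤ ((((⌈x * 2^i⌉ : ℤ) : ℚ) / 2^i : ℚ) : ℝ) := by
  have hpos : (0:ℝ) < 2^i := by positivity
  push_cast
  rw [le_div_iff₀ hpos]
  exact Int.le_ceil _

lemma ce_le (x : ℝ) (i : ℕ) : ((((⌈x * 2^i⌉ : ℤ) : ℚ) / 2^i : ℚ) : ℝ) ≤ x + 1/2^i := by
  have hpos : (0:ℝ) < 2^i := by positivity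
  have h : ((⌈x * 2^i⌉ : ℤ) : ℝ) < x * 2^i + 1 := Int.ceil_lt_add_one _
  push_cast
  rw [div_le_iff₀ hpos]
  have he : (x + 1/2^i) * 2^i = x * 2^i + 1 := by field_simp
  linarith [he ▸ h]

lemma ce_anti (x : ℝ) (i : ℕ) :
    (((⌈x * 2^(i+1)⌉ : ℤ) : ℚ) / 2^(i+1) : ℚ) ≤ ((⌈x * 2^i⌉ : ℤ) : ℚ) / 2^i := by
  have h : ⌈x * 2^(i+1)⌉ ≤ 2 * ⌈x * 2^i⌉ := by
    rw [show (2 * ⌈x * 2^i⌉ : ℤ) = ⌈((2 * ⌈x * 2^i⌉ : ℤ) : ℝ)⌉ from (Int.ceil_intCast _).symm]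
    apply Int.ceil_le_ceil
    push_cast
    have := Int.le_ceil (x * 2^i)
    rw [pow_succ]
    nlinarith [this]
  have h' : ((⌈x * 2^(i+1)⌉ : ℤ) : ℚ) ≤ 2 * ((⌈x * 2^i⌉ : ℤ) : ℚ) := by exact_mod_cast h
  have hpos : (0:ℚ) < 2^i := by positivity
  rw [div_le_div_iff₀ (by positivity) hpos]
  have hp : (2:ℚ)^(i+1) = 2^i * 2 := pow_succ 2 i
  have := mul_le_mul_of_nonneg_right h' (le_of_lt hpos)
  rw [hp]
  linarith

lemma tendsto_inv2 : Filter.Tendsto (fun i : ℕ => (1:ℝ)/2^i) Filter.atTop (nhds 0) := by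
  have := tendsto_pow_atTop_nhds_zero_of_lt_one (by norm_num : (0:ℝ) ≤ 1/2) (by norm_num : (1:ℝ)/2 < 1)
  simpa [div_pow] using this

/-- Rational approximation of the deficiency coupling condition. -/
theorem stmt15 {A B : Type*} [Fintype A] [Fintype B]
    (R : A → B → Prop) (P : A → ℝ) (P' : B → ℝ) (ε : ℝ) (hε : 0 ≤ ε)
    (hP0 : ∀ a, 0 ≤ P a) (hP1 : ∑ a, P a = 1)
    (hP'0 : ∀ b, 0 ≤ P' b) (hP'1 : ∑ b, P' b = 1)
    (hall : ∀ U : Finset A, ∑ a ∈ U, P a ≤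
      (∑ b ∈ univ.filter (fun b => ∃ a ∈ U, R a b), P' b) + ε) :
    ∃ (Pq : ℕ → A → ℚ) (P'q : ℕ → B → ℚ) (εq : ℕ → ℚ),
      (∀ i, (∀ a, 0 ≤ Pq i a) ∧ ∑ a, Pq i a = 1) ∧
      (∀ i, (∀ b, 0 ≤ P'q i b) ∧ ∑ b, P'q i b = 1) ∧
      (∀ i, ε ≤ (εq i : ℝ)) ∧ (Antitone fun i => (εq i : ℝ)) ∧
      Filter.Tendsto (fun i => (εq i : ℝ)) Filter.atTop (nhds ε) ∧
      (∀ a, Filter.Tendsto (fun i => ((Pq i a : ℝ))) Filter.atTop (nhds (P a))) ∧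
      (∀ b, Filter.Tendsto (fun i => ((P'q i b : ℝ))) Filter.atTop (nhds (P' b))) ∧
      ∀ i (U : Finset A), ∑ a ∈ U, Pq i a ≤
        (∑ b ∈ univ.filter (fun b => ∃ a ∈ U, R a b), P'q i b) + εq i := by
  have hA : Nonempty A := by
    by_contra h
    rw [not_nonempty_iff] at h
    rw [Finset.univ_eq_empty, Finset.sum_empty] at hP1
    norm_num at hP1
  have hB : Nonempty B := by
    by_contra h
    rw [not_nonempty_iff] at h
    rw [Finset.univ_eq_empty, Finset.sum_empty] at hP'1
    norm_num at hP'1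
  obtain ⟨a₀⟩ := hA
  obtain ⟨b₀⟩ := hB
  -- dyadic approximations
  set q : ℕ → A → ℚ := fun i a => ((⌊P a * 2^i⌋ : ℤ) : ℚ) / 2^i with hq
  set q' : ℕ → B → ℚ := fun i b => ((⌊P' b * 2^i⌋ : ℤ) : ℚ) / 2^i with hq'
  set d : ℕ → ℚ := fun i => 1 - ∑ a, q i a with hd
  set d' : ℕ → ℚ := fun i => 1 - ∑ b, q' i b with hd'
  set Pq : ℕ → A → ℚ := fun i a => q i a + if a = a₀ then d i else 0 with hPq
  set P'q : ℕ → B → ℚ := fun i b => q' i b + if b = b₀ then d' i else 0 with hP'q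
  set C : ℚ := (Fintype.card A : ℚ) + (Fintype.card B : ℚ) with hC
  set εq : ℕ → ℚ := fun i => ((⌈ε * 2^i⌉ : ℤ) : ℚ) / 2^i + C / 2^i with hεq
  have hCpos : (0:ℚ) ≤ C := by positivity
  have hcA : (0:ℝ) ≤ (Fintype.card A : ℝ) := by positivity
  -- basic bounds
  have hq_le : ∀ i a, ((q i a : ℚ) : ℝ) ≤ P a := fun i a => fl_le (P a) i
  have hq_ge : ∀ i a, P a - 1/2^i ≤ ((q i a : ℚ) : ℝ) := fun i a => fl_ge (P a) i
  have hq_nn : ∀ i a, (0:ℚ) ≤ q i a := fun i a => fl_nonneg (P a) i (hP0 a)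
  have hq'_le : ∀ i b, ((q' i b : ℚ) : ℝ) ≤ P' b := fun i b => fl_le (P' b) i
  have hq'_ge : ∀ i b, P' b - 1/2^i ≤ ((q' i b : ℚ) : ℝ) := fun i b => fl_ge (P' b) i
  have hq'_nn : ∀ i b, (0:ℚ) ≤ q' i b := fun i b => fl_nonneg (P' b) i (hP'0 b)
  have hd_nn : ∀ i, (0:ℚ) ≤ d i := by
    intro i
    have hsq : (∑ a, q i a : ℚ) ≤ 1 := by
      rw [← Rat.cast_le (K := ℝ)]
      push_cast
      calc ∑ a, ((q i a : ℚ) : ℝ) ≤ ∑ a, P a := Finset.sum_le_sum fun a _ => hq_le i a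
        _ = 1 := hP1
    simp only [hd]
    linarith
  have hd'_nn : ∀ i, (0:ℚ) ≤ d' i := by
    intro i
    have hsq : (∑ b, q' i b : ℚ) ≤ 1 := by
      rw [← Rat.cast_le (K := ℝ)]
      push_cast
      calc ∑ b, ((q' i b : ℚ) : ℝ) ≤ ∑ b, P' b := Finset.sum_le_sum fun b _ => hq'_le i b
        _ = 1 := hP'1
    simp only [hd']
    linarith
  have hd_le : ∀ i, ((d i : ℚ) : ℝ) ≤ (Fintype.card A : ℝ) / 2^i := by
    intro i
    have h1 : ∑ a, (P a - 1/2^i) ≤ ∑ a, ((q i a : ℚ) : ℝ) :=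
      Finset.sum_le_sum fun a _ => hq_ge i a
    rw [Finset.sum_sub_distrib, hP1, Finset.sum_const, Finset.card_univ] at h1
    simp only [hd]
    push_cast
    simp only [nsmul_eq_mul] at h1
    have : (Fintype.card A : ℝ) * (1/2^i) = (Fintype.card A : ℝ) / 2^i := by ring
    linarith [this ▸ h1]
  have hPq_sum : ∀ i, ∑ a, Pq i a = 1 := by
    intro i
    simp only [hPq, Finset.sum_add_distrib, Finset.sum_ite_eq' univ a₀, Finset.mem_univ,
      if_true, hd]
    ring
  have hP'q_sum : ∀ i, ∑ b, P'q i b = 1 := by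
    intro i
    simp only [hP'q, Finset.sum_add_distrib, Finset.sum_ite_eq' univ b₀, Finset.mem_univ,
      if_true, hd']
    ring
  have hPq_nn : ∀ i a, (0:ℚ) ≤ Pq i a := by
    intro i a
    have : (0:ℚ) ≤ (if a = a₀ then d i else 0) := by
      split <;> simp [hd_nn i]
    exact add_nonneg (hq_nn i a) this
  have hP'q_nn : ∀ i b, (0:ℚ) ≤ P'q i b := by
    intro i b
    have : (0:ℚ) ≤ (if b = b₀ then d' i else 0) := by
      split <;> simp [hd'_nn i]
    exact add_nonneg (hq'_nn i b) this
  -- εq properties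
  have hεq_ge : ∀ i, ε ≤ ((εq i : ℚ) : ℝ) := by
    intro i
    have h1 := ce_ge ε i
    have h2 : (0:ℝ) ≤ ((Fintype.card A:ℝ) + (Fintype.card B:ℝ)) / 2^i := by positivity
    simp only [hεq, hC]
    push_cast at h1 ⊢
    linarith
  have hεq_geC : ∀ i, ε + ((C:ℚ):ℝ) / 2^i ≤ ((εq i : ℚ) : ℝ) := by
    intro i
    have h1 := ce_ge ε i
    simp only [hεq, hC]
    push_cast at h1 ⊢
    linarith
  have hεq_le : ∀ i, ((εq i : ℚ) : ℝ) ≤ ε + (1 + ((C:ℚ):ℝ)) / 2^i := by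
    intro i
    have h1 := ce_le ε i
    simp only [hεq, hC]
    push_cast at h1 ⊢
    have he : (1 + ((Fintype.card A:ℝ) + (Fintype.card B:ℝ)))/2^i
        = 1/2^i + ((Fintype.card A:ℝ) + (Fintype.card B:ℝ))/2^i := by ring
    linarith [he]
  have hεq_anti : Antitone fun i => ((εq i : ℚ) : ℝ) := by
    apply antitone_nat_of_succ_le
    intro i
    rw [Rat.cast_le]
    have h1 := ce_anti ε i
    have h2 : C / 2^(i+1) ≤ C / 2^i := by
      apply div_le_div_of_nonneg_left hCpos (by positivity)
      rw [pow_succ]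
      nlinarith [pow_pos (by norm_num : (0:ℚ) < 2) i]
    simp only [hεq, hC]
    exact add_le_add h1 h2
  -- convergence helpers
  have hdiv : ∀ c : ℝ, Filter.Tendsto (fun i : ℕ => c / 2^i) Filter.atTop (nhds 0) := by
    intro c
    have := tendsto_inv2.const_mul c
    simpa [mul_one_div, div_eq_mul_inv] using this
  have hεq_tendsto : Filter.Tendsto (fun i => ((εq i : ℚ) : ℝ)) Filter.atTop (nhds ε) := by
    apply tendsto_of_tendsto_of_tendsto_of_le_of_le
      (g := fun _ : ℕ => ε) (h := fun i : ℕ => ε + (1 + ((C:ℚ):ℝ)) / 2^i)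
    · exact tendsto_const_nhds
    · simpa using (tendsto_const_nhds (x := ε)).add (hdiv (1 + ((C:ℚ):ℝ)))
    · exact hεq_ge
    · exact hεq_le
  -- pointwise bounds for Pq, P'q
  have hPq_le : ∀ i a, ((Pq i a : ℚ) : ℝ) ≤ P a + (Fintype.card A : ℝ) / 2^i := by
    intro i a
    have h1 := hq_le i a
    have h2 : ((if a = a₀ then d i else 0 : ℚ) : ℝ) ≤ (Fintype.card A : ℝ) / 2^i := by
      split
      · exact hd_le i
      · simp; positivity
    calc ((Pq i a : ℚ) : ℝ) = ((q i a : ℚ) : ℝ) + ((if a = a₀ then d i else 0 : ℚ) : ℝ) := by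
          push_cast [hPq]; ring
      _ ≤ P a + (Fintype.card A : ℝ) / 2^i := add_le_add h1 h2
  have hPq_ge : ∀ i a, P a - 1/2^i ≤ ((Pq i a : ℚ) : ℝ) := by
    intro i a
    have h1 := hq_ge i a
    have h2 : (0:ℝ) ≤ ((if a = a₀ then d i else 0 : ℚ) : ℝ) := by
      split
      · exact_mod_cast hd_nn i
      · simp
    calc P a - 1/2^i ≤ ((q i a : ℚ) : ℝ) := h1
      _ ≤ ((q i a : ℚ) : ℝ) + ((if a = a₀ then d i else 0 : ℚ) : ℝ) := by linarith
      _ = ((Pq i a : ℚ) : ℝ) := by push_cast [hPq]; ring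
  have hP'q_ge : ∀ i b, P' b - 1/2^i ≤ ((P'q i b : ℚ) : ℝ) := by
    intro i b
    have h1 := hq'_ge i b
    have h2 : (0:ℝ) ≤ ((if b = b₀ then d' i else 0 : ℚ) : ℝ) := by
      split
      · exact_mod_cast hd'_nn i
      · simp
    calc P' b - 1/2^i ≤ ((q' i b : ℚ) : ℝ) := h1
      _ ≤ ((q' i b : ℚ) : ℝ) + ((if b = b₀ then d' i else 0 : ℚ) : ℝ) := by linarith
      _ = ((P'q i b : ℚ) : ℝ) := by push_cast [hP'q]; ring
  have hd'_le : ∀ i, ((d' i : ℚ) : ℝ) ≤ (Fintype.card B : ℝ) / 2^i := by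
    intro i
    have h1 : ∑ b, (P' b - 1/2^i) ≤ ∑ b, ((q' i b : ℚ) : ℝ) :=
      Finset.sum_le_sum fun b _ => hq'_ge i b
    rw [Finset.sum_sub_distrib, hP'1, Finset.sum_const, Finset.card_univ] at h1
    simp only [hd']
    push_cast
    simp only [nsmul_eq_mul] at h1
    have : (Fintype.card B : ℝ) * (1/2^i) = (Fintype.card B : ℝ) / 2^i := by ring
    linarith [this ▸ h1]
  have hP'q_le : ∀ i b, ((P'q i b : ℚ) : ℝ) ≤ P' b + (Fintype.card B : ℝ) / 2^i := by
    intro i b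
    have h1 := hq'_le i b
    have h2 : ((if b = b₀ then d' i else 0 : ℚ) : ℝ) ≤ (Fintype.card B : ℝ) / 2^i := by
      split
      · exact hd'_le i
      · simp; positivity
    calc ((P'q i b : ℚ) : ℝ) = ((q' i b : ℚ) : ℝ) + ((if b = b₀ then d' i else 0 : ℚ) : ℝ) := by
          push_cast [hP'q]; ring
      _ ≤ P' b + (Fintype.card B : ℝ) / 2^i := add_le_add h1 h2
  -- convergence of Pq, P'q
  have hPq_tendsto : ∀ a, Filter.Tendsto (fun i => ((Pq i a : ℚ) : ℝ)) Filter.atTop (nhds (P a)) := by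
    intro a
    apply tendsto_of_tendsto_of_tendsto_of_le_of_le
      (g := fun i : ℕ => P a - 1/2^i) (h := fun i : ℕ => P a + (Fintype.card A : ℝ) / 2^i)
    · simpa using (tendsto_const_nhds (x := P a)).sub (hdiv 1)
    · simpa using (tendsto_const_nhds (x := P a)).add (hdiv (Fintype.card A : ℝ))
    · exact fun i => hPq_ge i a
    · exact fun i => hPq_le i a
  have hP'q_tendsto : ∀ b, Filter.Tendsto (fun i => ((P'q i b : ℚ) : ℝ)) Filter.atTop (nhds (P' b)) := by
    intro b
    apply tendsto_of_tendsto_of_tendsto_of_le_of_le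
      (g := fun i : ℕ => P' b - 1/2^i) (h := fun i : ℕ => P' b + (Fintype.card B : ℝ) / 2^i)
    · simpa using (tendsto_const_nhds (x := P' b)).sub (hdiv 1)
    · simpa using (tendsto_const_nhds (x := P' b)).add (hdiv (Fintype.card B : ℝ))
    · exact fun i => hP'q_ge i b
    · exact fun i => hP'q_le i b
  -- key inequality
  have key : ∀ i (U : Finset A), (∑ a ∈ U, ((Pq i a : ℚ) : ℝ)) ≤
      (∑ b ∈ univ.filter (fun b => ∃ a ∈ U, R a b), ((P'q i b : ℚ) : ℝ)) + ((εq i : ℚ) : ℝ) := by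
    intro i U
    set N := univ.filter (fun b => ∃ a ∈ U, R a b) with hN
    have h1 : ∑ a ∈ U, ((Pq i a : ℚ) : ℝ) ≤ (∑ a ∈ U, P a) + (Fintype.card A : ℝ) / 2^i := by
      have hsum : ∑ a ∈ U, ((Pq i a : ℚ) : ℝ) =
          (∑ a ∈ U, ((q i a : ℚ) : ℝ)) + ∑ a ∈ U, ((if a = a₀ then d i else 0 : ℚ) : ℝ) := by
        rw [← Finset.sum_add_distrib]
        congr 1 with a
        push_cast [hPq]
        ring
      have hq_sum : ∑ a ∈ U, ((q i a : ℚ) : ℝ) ≤ ∑ a ∈ U, P a :=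
        Finset.sum_le_sum fun a _ => hq_le i a
      have hite : ∑ a ∈ U, ((if a = a₀ then d i else 0 : ℚ) : ℝ) ≤ (Fintype.card A : ℝ) / 2^i := by
        have : ∑ a ∈ U, ((if a = a₀ then d i else 0 : ℚ) : ℝ) =
            if a₀ ∈ U then ((d i : ℚ) : ℝ) else 0 := by
          rw [← Finset.sum_ite_eq' U a₀ (fun _ => ((d i : ℚ) : ℝ))]
          congr 1 with a
          split <;> simp_all
        rw [this]
        split
        · exact hd_le i
        · positivity
      linarith [hsum ▸ (add_le_add hq_sum hite)]
    have h2 : (∑ b ∈ N, P' b) - (Fintype.card B : ℝ) / 2^i ≤ ∑ b ∈ N, ((P'q i b : ℚ) : ℝ) := by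
      have hs : ∑ b ∈ N, (P' b - 1/2^i) ≤ ∑ b ∈ N, ((P'q i b : ℚ) : ℝ) :=
        Finset.sum_le_sum fun b _ => hP'q_ge i b
      rw [Finset.sum_sub_distrib, Finset.sum_const] at hs
      have hcard : (N.card : ℝ) ≤ (Fintype.card B : ℝ) := by
        exact_mod_cast Finset.card_le_card (Finset.subset_univ N) |>.trans_eq
          Finset.card_univ
      have hpos : (0:ℝ) ≤ 1/2^i := by positivity
      simp only [nsmul_eq_mul] at hs
      have hm := mul_le_mul_of_nonneg_right hcard hpos
      have he : (Fintype.card B : ℝ) * (1/2^i) = (Fintype.card B : ℝ) / 2^i := by ring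
      linarith [he ▸ hm]
    have h3 := hall U
    have h4 := hεq_geC i
    have hCcast : ((C:ℚ):ℝ) = (Fintype.card A : ℝ) + (Fintype.card B : ℝ) := by
      push_cast [hC]; ring
    rw [hCcast] at h4
    have hCdiv : ((Fintype.card A : ℝ) + (Fintype.card B : ℝ)) / 2^i
        = (Fintype.card A : ℝ) / 2^i + (Fintype.card B : ℝ) / 2^i := by ring
    linarith [hCdiv ▸ h4]
  refine ⟨Pq, P'q, εq, fun i => ⟨hPq_nn i, hPq_sum i⟩, fun i => ⟨hP'q_nn i, hP'q_sum i⟩,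
    hεq_ge, hεq_anti, hεq_tendsto, hPq_tendsto, hP'q_tendsto, ?_⟩
  intro i U
  rw [← Rat.cast_le (K := ℝ)]
  push_cast
  exact key i U
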